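/- Let a > 0 and n ≥ 0. The determinant of the (n+1)×(n+1) matrix with entries (D + ln a)^i applied to binom(x, j) (the polynomial x(x-1)···(x-j+1)/j!), for 0 ≤ i,j ≤ n, equals 1 for all x. -/
import Mathlib


/-- The polynomial binomial coefficient `x(x-1)⋯(x-j+1)/j!`. -/
noncomputable def polyBinom (x : ℝ) (j : ℕ) : ℝ :=
  (∏ k ∈ Finset.range j, (x - (k : ℝ))) / Nat.factorial j

/-- The operator `D + ln a`, i.e. `y ↦ y' + (ln a) y`. -/
noncomputable def DplusLog (a : ℝ) (f : ℝ → ℝ) : ℝ → ℝ :=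
  fun x => deriv f x + Real.log a * f x

open Polynomial

/-- The binomial polynomial as a `Polynomial`. -/
noncomputable def pB (j : ℕ) : ℝ[X] :=
  C ((j.factorial : ℝ)⁻¹) * ∏ k ∈ Finset.range j, (X - C (k : ℝ))

lemma pB_eval (x : ℝ) (j : ℕ) : (pB j).eval x = polyBinom x j := by
  simp [pB, polyBinom, div_eq_inv_mul, eval_prod]

lemma monic_prod_aux (j : ℕ) : (∏ k ∈ Finset.range j, (X - C (k : ℝ))).Monic :=
  monic_prod_of_monic _ _ fun _ _ => monic_X_sub_C _

lemma prod_natDegree (j : ℕ) : (∏ k ∈ Finset.range j, (X - C (k : ℝ))).natDegree = j := by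
  rw [natDegree_prod_of_monic _ _ fun _ _ => monic_X_sub_C _]
  simp only [natDegree_X_sub_C]
  simp

lemma pB_natDegree (j : ℕ) : (pB j).natDegree ≤ j := by
  refine natDegree_mul_le.trans ?_
  rw [natDegree_C, prod_natDegree, zero_add]

lemma pB_coeff (j : ℕ) : (pB j).coeff j = (j.factorial : ℝ)⁻¹ := by
  rw [pB, coeff_C_mul]
  have h := (monic_prod_aux j).coeff_natDegree
  rw [prod_natDegree] at h
  rw [h, mul_one]

lemma iterate_deriv_pB_diag (x : ℝ) (j : ℕ) :
    (derivative^[j] (pB j)).eval x = 1 := by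
  have h1 := pB_natDegree j
  have hdeg : (derivative^[j] (pB j)).natDegree ≤ 0 := by
    refine (natDegree_iterate_derivative _ _).trans ?_
    omega
  rw [eq_C_of_natDegree_le_zero hdeg, eval_C, coeff_iterate_derivative]
  simp only [Nat.zero_add, Nat.descFactorial_self, pB_coeff, nsmul_eq_mul]
  rw [mul_inv_cancel₀]
  exact_mod_cast (Nat.factorial_pos j).ne'

/-- applying `DplusLog` iterated to a polynomial evaluation. -/
lemma DplusLog_iterate_poly (a : ℝ) (q : ℝ[X]) (i : ℕ) :
    (DplusLog a)^[i] (fun t => q.eval t) =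
      fun t => ((fun r : ℝ[X] => derivative r + C (Real.log a) * r)^[i] q).eval t := by
  induction i generalizing q with
  | zero => simp
  | succ i ih =>
    rw [Function.iterate_succ_apply, Function.iterate_succ_apply]
    have : DplusLog a (fun t => q.eval t) =
        fun t => (derivative q + C (Real.log a) * q).eval t := by
      funext t
      simp [DplusLog, Polynomial.deriv]
    rw [this, ih]

/-- expand the iterate of `D + c` as a binomial sum. -/
lemma step_iterate (c : ℝ) (q : ℝ[X]) (i : ℕ) :
    (fun r : ℝ[X] => derivative r + C c * r)^[i] q =
      ∑ m ∈ Finset.range (i + 1),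
        (i.choose m : ℝ) • c ^ (i - m) • derivative^[m] q := by
  have hfun : (fun r : ℝ[X] => derivative r + C c * r) =
      ⇑((derivative : ℝ[X] →ₗ[ℝ] ℝ[X]) + c • (1 : Module.End ℝ ℝ[X])) := by
    funext r
    simp [smul_eq_C_mul, add_comm]
  rw [hfun, ← Module.End.pow_apply]
  have hc : Commute (derivative : Module.End ℝ ℝ[X]) (c • (1 : Module.End ℝ ℝ[X])) :=
    (Commute.one_right _).smul_right c
  rw [hc.add_pow, LinearMap.sum_apply]
  refine Finset.sum_congr rfl fun m _ => ?_
  rw [_root_.smul_pow, one_pow]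
  simp only [Module.End.mul_apply, Module.End.natCast_apply, LinearMap.smul_apply,
    Module.End.one_apply, Module.End.pow_apply]
  rw [← Nat.cast_smul_eq_nsmul ℝ, iterate_derivative_smul, iterate_derivative_smul]
  rw [smul_comm]

theorem det_DplusLog_binom (n : ℕ) (a : ℝ) (ha : 0 < a) (x : ℝ) :
    (Matrix.of fun i j : Fin (n + 1) =>
      (DplusLog a)^[(i : ℕ)] (fun t => polyBinom t (j : ℕ)) x).det = 1 := by
  let c := Real.log a
  let L : Matrix (Fin (n + 1)) (Fin (n + 1)) ℝ :=
    Matrix.of fun i m : Fin (n + 1) => ((i : ℕ).choose m : ℝ) * c ^ ((i : ℕ) - (m : ℕ))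
  let N : Matrix (Fin (n + 1)) (Fin (n + 1)) ℝ :=
    Matrix.of fun m j : Fin (n + 1) => (derivative^[(m : ℕ)] (pB (j : ℕ))).eval x
  have hM : (Matrix.of fun i j : Fin (n + 1) =>
      (DplusLog a)^[(i : ℕ)] (fun t => polyBinom t (j : ℕ)) x) = L * N := by
    ext i j
    have hfun : (fun t => polyBinom t (j : ℕ)) = fun t => (pB (j : ℕ)).eval t := by
      funext t; rw [pB_eval]
    rw [Matrix.of_apply, hfun, DplusLog_iterate_poly]
    simp only [step_iterate, eval_finset_sum, eval_smul, smul_eq_mul]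
    simp only [Matrix.mul_apply, L, N, c, Matrix.of_apply]
    rw [Fin.sum_univ_eq_sum_range
      (fun m => ((i : ℕ).choose m : ℝ) * Real.log a ^ ((i : ℕ) - m) *
        (derivative^[m] (pB (j : ℕ))).eval x)]
    rw [Finset.sum_subset (Finset.range_subset_range.mpr (by omega : (i : ℕ) + 1 ≤ n + 1))
      (fun m _ hm => by
        have him : (i : ℕ) < m := by
          simp only [Finset.mem_range, not_lt] at hm
          omega
        simp [Nat.choose_eq_zero_of_lt him])]
    exact Finset.sum_congr rfl fun m _ => by ring
  rw [hM, Matrix.det_mul]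
  have hLdet : L.det = 1 := by
    rw [Matrix.det_of_lowerTriangular]
    · simp [L]
    · intro i m h
      have h' : i < m := h
      have : (i : ℕ) < (m : ℕ) := h'
      simp [L, Nat.choose_eq_zero_of_lt this]
  have hNdet : N.det = 1 := by
    rw [Matrix.det_of_upperTriangular]
    · simp only [N, Matrix.of_apply]
      exact Finset.prod_eq_one fun m _ => iterate_deriv_pB_diag x m
    · intro m j h
      have h' : (j : ℕ) < (m : ℕ) := h
      have hlt : (pB (j : ℕ)).natDegree < (m : ℕ) :=
        lt_of_le_of_lt (pB_natDegree _) h'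
      simp [N, iterate_derivative_eq_zero hlt]
  rw [hLdet, hNdet, mul_one]
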